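/- Let H be an infinite-dimensional separable complex Hilbert space and let 𝕋 denote the circle (e.g. the unit circle in ℂ). Let τ : C(𝕋, H →L[ℂ] H) → ℂ be a continuous (sup-norm-bounded) ℂ-linear functional such that τ(f * g) = τ(g * f) (pointwise products) for all continuous functions f, g : 𝕋 → (H →L[ℂ] H) whose values are all compact operators. Then τ(f) = 0 for every continuous f : 𝕋 → (H →L[ℂ] H) with all values compact. (This says every bounded tracial functional on 𝒦 ⊗ C(𝕋) vanishes, which is why a tracial Haar measure on the Natsume–Olsen sphere would have to kill the ideal 𝒦 ⊗ C(𝕋).) -/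

import Mathlib

set_option linter.unusedSectionVars false
set_option maxHeartbeats 1000000

section TFVaux

open Finset

variable {H : Type*} [NormedAddCommGroup H] [InnerProductSpace ℂ H] [CompleteSpace H]

local notation "⟪" x ", " y "⟫" => @inner ℂ _ _ x y

/-- rank one operator `ξ ↦ ⟪y, ξ⟫ • x`. -/
noncomputable def rkOp (x y : H) : H →L[ℂ] H := (innerSL ℂ y).smulRight x

@[simp] lemma rkOp_apply (x y ξ : H) : rkOp x y ξ = ⟪y, ξ⟫ • x := rfl

lemma isCompactOperator_rkOp (x y : H) : IsCompactOperator (rkOp x y) := by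
  have h1 : IsCompactOperator (id : ℂ → ℂ) :=
    ⟨Metric.closedBall 0 1, isCompact_closedBall _ _, by
      simpa using Metric.closedBall_mem_nhds (0 : ℂ) one_pos⟩
  have h2 := (h1.clm_comp (ContinuousLinearMap.toSpanSingleton ℂ x)).comp_clm (innerSL ℂ y)
  have : ⇑(rkOp x y) =
      (⇑(ContinuousLinearMap.toSpanSingleton ℂ x) ∘ id) ∘ ⇑(innerSL ℂ y) := rfl
  rw [this]
  exact h2

lemma orthonormal_norm_sum {ι : Type*} {v : ι → H} (hv : Orthonormal ℂ v) (c : ι → ℂ)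
    (s : Finset ι) : ‖∑ i ∈ s, c i • v i‖ ^ 2 = ∑ i ∈ s, ‖c i‖ ^ 2 := by
  have h := hv.inner_sum c c s
  rw [@norm_sq_eq_re_inner ℂ, h, map_sum]
  refine Finset.sum_congr rfl fun i _ => ?_
  rw [RCLike.conj_mul]
  norm_cast

lemma rkOp_mul_rkOp (x y z w : H) : rkOp x y * rkOp z w = ⟪y, z⟫ • rkOp x w := by
  ext ξ
  simp [inner_smul_right, smul_smul, mul_comm]

variable (b : HilbertBasis ℕ ℂ H)

noncomputable def POp (m : ℕ) : H →L[ℂ] H := ∑ i ∈ Finset.range m, rkOp (b i) (b i)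

noncomputable def WOp (m j : ℕ) : H →L[ℂ] H :=
  ∑ i ∈ Finset.range m, rkOp (b (m * (j + 1) + i)) (b i)

noncomputable def WdOp (m j : ℕ) : H →L[ℂ] H :=
  ∑ i ∈ Finset.range m, rkOp (b i) (b (m * (j + 1) + i))

lemma sum_rk_comp (σ : ℕ → ℕ) (hσ : Function.Injective σ) (u v : ℕ → H) (m : ℕ) :
    (∑ i ∈ Finset.range m, rkOp (u i) (b (σ i))) *
      (∑ i ∈ Finset.range m, rkOp (b (σ i)) (v i)) = ∑ i ∈ Finset.range m, rkOp (u i) (v i) := by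
  rw [Finset.sum_mul_sum]
  have horth := b.orthonormal.comp σ hσ
  have key : ∀ i i' : ℕ, ⟪b (σ i), b (σ i')⟫ = if i = i' then (1 : ℂ) else 0 := by
    intro i i'
    exact orthonormal_iff_ite.mp horth i i'
  calc (∑ i ∈ Finset.range m, ∑ i' ∈ Finset.range m,
          rkOp (u i) (b (σ i)) * rkOp (b (σ i')) (v i'))
      = ∑ i ∈ Finset.range m, ∑ i' ∈ Finset.range m,
          (if i = i' then rkOp (u i) (v i') else 0) := by
        refine Finset.sum_congr rfl fun i _ => Finset.sum_congr rfl fun i' _ => ?_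
        rw [rkOp_mul_rkOp, key i i']
        split <;> simp
    _ = ∑ i ∈ Finset.range m, rkOp (u i) (v i) := by
        refine Finset.sum_congr rfl fun i hi => ?_
        simp [Finset.sum_ite_eq, Finset.mem_range.mp hi]

lemma WdOp_mul_WOp (m j : ℕ) : WdOp b m j * WOp b m j = POp b m := by
  have : Function.Injective fun i : ℕ => m * (j + 1) + i := fun a c h => by
    simpa using h
  exact sum_rk_comp b _ this _ _ m

lemma POp_mul_POp (m : ℕ) : POp b m * POp b m = POp b m := by
  exact sum_rk_comp b id Function.injective_id b b m

lemma POp_apply (m : ℕ) (ξ : H) : POp b m ξ = ∑ i ∈ Finset.range m, ⟪b i, ξ⟫ • b i := by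
  simp [POp, ContinuousLinearMap.sum_apply]

lemma WdOp_apply (m j : ℕ) (ξ : H) :
    WdOp b m j ξ = ∑ i ∈ Finset.range m, ⟪b (m * (j + 1) + i), ξ⟫ • b i := by
  simp [WdOp, ContinuousLinearMap.sum_apply]

lemma WOp_apply (m j : ℕ) (ξ : H) :
    WOp b m j ξ = ∑ i ∈ Finset.range m, ⟪b i, ξ⟫ • b (m * (j + 1) + i) := by
  simp [WOp, ContinuousLinearMap.sum_apply]

lemma norm_POp_apply_le (m : ℕ) (ξ : H) : ‖POp b m ξ‖ ≤ ‖ξ‖ := by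
  have h1 : ‖POp b m ξ‖ ^ 2 = ∑ i ∈ Finset.range m, ‖⟪b i, ξ⟫‖ ^ 2 := by
    rw [POp_apply]
    exact orthonormal_norm_sum b.orthonormal _ _
  have h2 : ∑ i ∈ Finset.range m, ‖⟪b i, ξ⟫‖ ^ 2 ≤ ‖ξ‖ ^ 2 :=
    b.orthonormal.sum_inner_products_le ξ
  nlinarith [norm_nonneg (POp b m ξ), norm_nonneg ξ]

lemma norm_POp_comp_le (m : ℕ) (a : H →L[ℂ] H) : ‖POp b m * a‖ ≤ ‖a‖ := by
  refine ContinuousLinearMap.opNorm_le_bound _ (norm_nonneg a) fun ξ => ?_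
  calc ‖(POp b m * a) ξ‖ = ‖POp b m (a ξ)‖ := rfl
    _ ≤ ‖a ξ‖ := norm_POp_apply_le b m (a ξ)
    _ ≤ ‖a‖ * ‖ξ‖ := a.le_opNorm ξ

lemma isCompactOperator_sum {ι : Type*} (s : Finset ι) (F : ι → (H →L[ℂ] H))
    (hF : ∀ i ∈ s, IsCompactOperator (F i)) : IsCompactOperator (⇑(∑ i ∈ s, F i)) := by
  classical
  induction s using Finset.induction_on with
  | empty => simpa using isCompactOperator_zero
  | insert a s' hnotmem ih =>
    rw [Finset.sum_insert hnotmem]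
    have h1 : IsCompactOperator (F a) := hF a (Finset.mem_insert_self a s')
    have h2 := ih fun i hi => hF i (Finset.mem_insert_of_mem hi)
    have : ⇑(F a + ∑ i ∈ s', F i) = ⇑(F a) + ⇑(∑ i ∈ s', F i) := rfl
    rw [this]
    exact h1.add h2

lemma isCompactOperator_POp (m : ℕ) : IsCompactOperator (POp b m) :=
  isCompactOperator_sum _ _ fun i _ => isCompactOperator_rkOp _ _

lemma isCompactOperator_WdOp (m j : ℕ) : IsCompactOperator (WdOp b m j) :=
  isCompactOperator_sum _ _ fun i _ => isCompactOperator_rkOp _ _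

/-- the key norm estimate for block sums. -/
lemma norm_block_sum_le (a : H →L[ℂ] H) (m N : ℕ) :
    ‖∑ j ∈ Finset.range N, WOp b m j * a * WdOp b m j‖ ≤ ‖a‖ := by
  rcases Nat.eq_zero_or_pos m with hm | hm
  · subst hm
    simp [WOp, norm_nonneg]
  refine ContinuousLinearMap.opNorm_le_bound _ (norm_nonneg a) fun ξ => ?_
  set u : ℕ → H := fun j => a (WdOp b m j ξ) with hu
  have hmod : ∀ j i : ℕ, i < m → (m * (j + 1) + i) % m = i := by
    intro j i hi; rw [Nat.mul_add_mod]; exact Nat.mod_eq_of_lt hi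
  have hdiv : ∀ j i : ℕ, i < m → (m * (j + 1) + i) / m = j + 1 := by
    intro j i hi; rw [Nat.mul_add_div hm, Nat.div_eq_of_lt hi, add_zero]
  set s : Finset (ℕ × ℕ) := Finset.range N ×ˢ Finset.range m with hs
  set e : ℕ × ℕ → ℕ := fun p => m * (p.1 + 1) + p.2 with he
  have hinj : ∀ p ∈ s, ∀ q ∈ s, e p = e q → p = q := by
    intro p hp q hq hpq
    simp only [hs, Finset.mem_product, Finset.mem_range] at hp hq
    have h1 : p.2 = q.2 := by
      have := congrArg (· % m) hpq
      simpa [he, hmod _ _ hp.2, hmod _ _ hq.2] using this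
    have h2 : p.1 = q.1 := by
      have := congrArg (· / m) hpq
      simp only [he, hdiv _ _ hp.2, hdiv _ _ hq.2] at this
      omega
    exact Prod.ext h2 h1
  have happ : (∑ j ∈ Finset.range N, WOp b m j * a * WdOp b m j) ξ
      = ∑ p ∈ s, ⟪b p.2, u p.1⟫ • b (e p) := by
    rw [ContinuousLinearMap.sum_apply, hs, Finset.sum_product]
    refine Finset.sum_congr rfl fun j _ => ?_
    simp only [ContinuousLinearMap.mul_apply]
    rw [WOp_apply]
  have hc : ∀ p ∈ s, ⟪b (e p % m), u (e p / m - 1)⟫ = ⟪b p.2, u p.1⟫ := by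
    intro p hp
    simp only [hs, Finset.mem_product, Finset.mem_range] at hp
    simp [he, hmod _ _ hp.2, hdiv _ _ hp.2]
  have hnorm1 : ‖(∑ j ∈ Finset.range N, WOp b m j * a * WdOp b m j) ξ‖ ^ 2
      = ∑ p ∈ s, ‖⟪b p.2, u p.1⟫‖ ^ 2 := by
    have himg : ∑ p ∈ s, ⟪b p.2, u p.1⟫ • b (e p)
        = ∑ n ∈ s.image e, (fun n => ⟪b (n % m), u (n / m - 1)⟫) n • b n := by
      rw [Finset.sum_image hinj]
      exact (Finset.sum_congr rfl fun p hp => by beta_reduce; rw [hc p hp]).symm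
    rw [happ, himg, orthonormal_norm_sum b.orthonormal, Finset.sum_image hinj]
    exact Finset.sum_congr rfl fun p hp => by beta_reduce; rw [hc p hp]
  have hbound_j : ∀ j, (∑ i ∈ Finset.range m, ‖⟪b i, u j⟫‖ ^ 2) ≤
      ‖a‖ ^ 2 * ∑ i ∈ Finset.range m, ‖⟪b (m * (j + 1) + i), ξ⟫‖ ^ 2 := by
    intro j
    have h1 : (∑ i ∈ Finset.range m, ‖⟪b i, u j⟫‖ ^ 2) ≤ ‖u j‖ ^ 2 :=
      b.orthonormal.sum_inner_products_le (u j)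
    have h2 : ‖u j‖ ≤ ‖a‖ * ‖WdOp b m j ξ‖ := a.le_opNorm _
    have h2' : ‖u j‖ ^ 2 ≤ (‖a‖ * ‖WdOp b m j ξ‖) ^ 2 :=
      pow_le_pow_left₀ (norm_nonneg _) h2 2
    have h3 : ‖WdOp b m j ξ‖ ^ 2 = ∑ i ∈ Finset.range m, ‖⟪b (m * (j + 1) + i), ξ⟫‖ ^ 2 := by
      rw [WdOp_apply]
      exact orthonormal_norm_sum b.orthonormal _ _
    rw [mul_pow, h3] at h2'
    linarith
  have hbessel : ∑ p ∈ s, ‖⟪b (e p), ξ⟫‖ ^ 2 ≤ ‖ξ‖ ^ 2 := by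
    have h := b.orthonormal.sum_inner_products_le (s := s.image e) ξ
    rwa [Finset.sum_image hinj] at h
  have total : ‖(∑ j ∈ Finset.range N, WOp b m j * a * WdOp b m j) ξ‖ ^ 2
      ≤ ‖a‖ ^ 2 * ‖ξ‖ ^ 2 := by
    rw [hnorm1]
    calc ∑ p ∈ s, ‖⟪b p.2, u p.1⟫‖ ^ 2
        = ∑ j ∈ Finset.range N, ∑ i ∈ Finset.range m, ‖⟪b i, u j⟫‖ ^ 2 := by
          rw [hs, Finset.sum_product]
      _ ≤ ∑ j ∈ Finset.range N, ‖a‖ ^ 2 * ∑ i ∈ Finset.range m, ‖⟪b (m * (j + 1) + i), ξ⟫‖ ^ 2 :=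
          Finset.sum_le_sum fun j _ => hbound_j j
      _ = ‖a‖ ^ 2 * ∑ p ∈ s, ‖⟪b (e p), ξ⟫‖ ^ 2 := by
          rw [← Finset.mul_sum, hs, Finset.sum_product]
      _ ≤ ‖a‖ ^ 2 * ‖ξ‖ ^ 2 :=
          mul_le_mul_of_nonneg_left hbessel (sq_nonneg _)
  nlinarith [norm_nonneg ((∑ j ∈ Finset.range N, WOp b m j * a * WdOp b m j) ξ),
    mul_nonneg (norm_nonneg a) (norm_nonneg ξ)]

lemma tendsto_POp_apply (y : H) :
    Filter.Tendsto (fun m => POp b m y) Filter.atTop (nhds y) := by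
  have h := (b.hasSum_repr y).tendsto_sum_nat
  have heq : ∀ m, POp b m y = ∑ i ∈ Finset.range m, b.repr y i • b i := by
    intro m
    rw [POp_apply]
    exact Finset.sum_congr rfl fun i _ => by rw [b.repr_apply_apply]
  simpa only [← heq] using h

/-- finite rank approximation of a compact operator, uniformly for large `m`. -/
lemma approx_single (a : H →L[ℂ] H) (ha : IsCompactOperator a) {ε : ℝ} (hε : 0 < ε) :
    ∃ M : ℕ, ∀ m ≥ M, ‖a - POp b m * a‖ ≤ ε := by
  classical
  have hC : IsCompact (closure ((a : H →ₗ[ℂ] H) '' Metric.closedBall 0 1)) :=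
    IsCompactOperator.isCompact_closure_image_closedBall (𝕜₁ := ℂ) (f := (a : H →ₗ[ℂ] H)) ha 1
  obtain ⟨t, htC, htfin, hcover⟩ := hC.finite_cover_balls (show (0:ℝ) < ε/4 by positivity)
  choose M hM using fun y : H =>
    Metric.tendsto_atTop.mp (tendsto_POp_apply b y) (ε/4) (by positivity)
  refine ⟨htfin.toFinset.sup M, fun m hm => ?_⟩
  refine ContinuousLinearMap.opNorm_le_bound _ hε.le fun ξ => ?_
  rcases eq_or_ne ξ 0 with rfl | hξ
  · simp
  have hξ' : 0 < ‖ξ‖ := norm_pos_iff.mpr hξ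
  set η := ‖ξ‖⁻¹ • ξ with hηdef
  have hη : ‖η‖ ≤ 1 := by
    rw [hηdef, norm_smul, norm_inv, norm_norm, inv_mul_cancel₀ hξ'.ne']
  have hmem : a η ∈ closure ((a : H →ₗ[ℂ] H) '' Metric.closedBall 0 1) :=
    subset_closure ⟨η, by simpa [Metric.mem_closedBall, dist_zero_right] using hη, rfl⟩
  obtain ⟨y, hyt, hy⟩ : ∃ y ∈ t, a η ∈ Metric.ball y (ε/4) := by
    have := hcover hmem
    simpa using this
  have hmy : m ≥ M y :=
    le_trans (Finset.le_sup (htfin.mem_toFinset.mpr hyt)) hm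
  have hunit : ‖a η - POp b m (a η)‖ ≤ ε := by
    have d1 : ‖a η - y‖ < ε/4 := by
      rw [← dist_eq_norm]; exact Metric.mem_ball.mp hy
    have d2 : ‖y - POp b m y‖ < ε/4 := by
      rw [← dist_eq_norm, dist_comm]; exact hM y m hmy
    have d3 : ‖POp b m y - POp b m (a η)‖ ≤ ‖a η - y‖ := by
      rw [← map_sub, ← norm_sub_rev]
      exact norm_POp_apply_le b m _
    calc ‖a η - POp b m (a η)‖
        = ‖(a η - y) + ((y - POp b m y) + (POp b m y - POp b m (a η)))‖ := by
          congr 1; abel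
      _ ≤ ‖a η - y‖ + (‖y - POp b m y‖ + ‖POp b m y - POp b m (a η)‖) :=
          le_trans (norm_add_le _ _) (by gcongr; exact norm_add_le _ _)
      _ ≤ ε := by linarith
  have hsplit : (a - POp b m * a) ξ = ‖ξ‖ • ((a - POp b m * a) η) := by
    rw [hηdef, (a - POp b m * a).map_smul_of_tower, smul_smul, mul_inv_cancel₀ hξ'.ne', one_smul]
  calc ‖(a - POp b m * a) ξ‖ = ‖ξ‖ * ‖(a - POp b m * a) η‖ := by
        rw [hsplit, norm_smul, norm_norm]
    _ ≤ ‖ξ‖ * ε := by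
        refine mul_le_mul_of_nonneg_left ?_ hξ'.le
        simpa [ContinuousLinearMap.sub_apply, ContinuousLinearMap.mul_apply] using hunit
    _ = ε * ‖ξ‖ := mul_comm _ _

/-- uniform finite rank approximation of a compact-operator-valued continuous function. -/
lemma approx_uniform (f : C(Circle, H →L[ℂ] H)) (hf : ∀ x, IsCompactOperator (f x))
    {ε : ℝ} (hε : 0 < ε) : ∃ m : ℕ, ∀ x, ‖f x - POp b m * f x‖ ≤ ε := by
  classical
  have hS : IsCompact (Set.range f) := isCompact_range f.continuous
  obtain ⟨t, htS, htfin, hcover⟩ := hS.finite_cover_balls (show (0:ℝ) < ε/4 by positivity)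
  have hyc : ∀ y ∈ t, IsCompactOperator y := by
    intro y hy
    obtain ⟨x, rfl⟩ := htS hy
    exact hf x
  choose M hM using fun y (hy : y ∈ htfin.toFinset) =>
    approx_single b y (hyc y (htfin.mem_toFinset.mp hy)) (show (0:ℝ) < ε/4 by positivity)
  set m₀ := htfin.toFinset.attach.sup (fun p => M p.1 p.2) with hm₀
  refine ⟨m₀, fun x => ?_⟩
  obtain ⟨y, hyt, hy⟩ : ∃ y ∈ t, f x ∈ Metric.ball y (ε/4) := by
    have := hcover (Set.mem_range_self x)
    simpa using this
  have hyt' : y ∈ htfin.toFinset := htfin.mem_toFinset.mpr hyt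
  have hle : M y hyt' ≤ m₀ :=
    Finset.le_sup (f := fun p : {z // z ∈ htfin.toFinset} => M p.1 p.2)
      (Finset.mem_attach _ ⟨y, hyt'⟩)
  have d1 : ‖f x - y‖ < ε/4 := by
    rw [← dist_eq_norm]; exact Metric.mem_ball.mp hy
  have d2 : ‖y - POp b m₀ * y‖ ≤ ε/4 := hM y hyt' m₀ hle
  have d3 : ‖POp b m₀ * y - POp b m₀ * f x‖ ≤ ‖f x - y‖ := by
    rw [← mul_sub]
    exact le_trans (norm_POp_comp_le b m₀ _) (le_of_eq (norm_sub_rev _ _))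
  calc ‖f x - POp b m₀ * f x‖
      = ‖(f x - y) + ((y - POp b m₀ * y) + (POp b m₀ * y - POp b m₀ * f x))‖ := by
        congr 1; abel
    _ ≤ ‖f x - y‖ + (‖y - POp b m₀ * y‖ + ‖POp b m₀ * y - POp b m₀ * f x‖) :=
        le_trans (norm_add_le _ _) (by gcongr; exact norm_add_le _ _)
    _ ≤ ε := by linarith

end TFVaux

lemma exists_hilbertBasis_nat (H : Type*) [NormedAddCommGroup H] [InnerProductSpace ℂ H]
    [CompleteSpace H] [TopologicalSpace.SeparableSpace H] (hinf : ¬ FiniteDimensional ℂ H) :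
    Nonempty (HilbertBasis ℕ ℂ H) := by
  classical
  obtain ⟨w, b, hb⟩ := exists_hilbertBasis ℂ H
  have horth : Orthonormal ℂ ((↑) : w → H) := by rw [← hb]; exact b.orthonormal
  have hdist : ∀ x ∈ w, ∀ y ∈ w, x ≠ y → (1:ℝ) ≤ dist x y := by
    intro x hx y hy hxy
    have h0 : (inner ℂ x y : ℂ) = 0 := by
      have := horth.2 (show (⟨x, hx⟩ : w) ≠ ⟨y, hy⟩ by simpa using hxy)
      exact this
    have h1 : ‖x‖ = 1 := horth.1 (⟨x, hx⟩ : w)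
    have h2 : ‖y‖ = 1 := horth.1 (⟨y, hy⟩ : w)
    have h3 : ‖x - y‖ ^ 2 = 2 := by
      rw [@norm_sub_sq ℂ, h0, h1, h2]
      norm_num
    rw [dist_eq_norm]
    nlinarith [norm_nonneg (x - y)]
  have hcw : w.Countable := by
    have hd : w.PairwiseDisjoint (fun x => Metric.ball x (1/2)) := by
      intro x hx y hy hxy
      exact Metric.ball_disjoint_ball (by have := hdist x hx y hy hxy; norm_num; linarith)
    exact hd.countable_of_isOpen (fun i _ => Metric.isOpen_ball)
      (fun i _ => Metric.nonempty_ball.mpr (by norm_num))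
  have hwi : w.Infinite := by
    intro hfin
    apply hinf
    have hfd : FiniteDimensional ℂ (Submodule.span ℂ w) := FiniteDimensional.span_of_finite ℂ hfin
    have hclosed : IsClosed ((Submodule.span ℂ w : Submodule ℂ H) : Set H) :=
      (Submodule.span ℂ w).closed_of_finiteDimensional
    have h1 := b.dense_span
    rw [hb, Subtype.range_coe] at h1
    have htop : Submodule.span ℂ w = ⊤ := by
      rw [← hclosed.submodule_topologicalClosure_eq, h1]
    rw [htop] at hfd
    exact Module.Finite.equiv (Submodule.topEquiv)
  haveI := hcw.to_subtype
  haveI := hwi.to_subtype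
  obtain ⟨d⟩ := nonempty_denumerable (↥w)
  let e : ℕ ≃ ↥w := (Denumerable.eqv ↥w).symm
  have horth2 : Orthonormal ℂ (((↑) : w → H) ∘ e) := horth.comp e e.injective
  have hrange : Set.range (((↑) : w → H) ∘ e) = w := by
    rw [Set.range_comp, Equiv.range_eq_univ, Set.image_univ, Subtype.range_coe]
  have hsp : ⊤ ≤ (Submodule.span ℂ (Set.range (((↑) : w → H) ∘ e))).topologicalClosure := by
    rw [hrange]
    have h1 := b.dense_span
    rw [hb, Subtype.range_coe] at h1
    rw [h1]
  exact ⟨HilbertBasis.mk horth2 hsp⟩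


/-- Let `H` be an infinite-dimensional separable complex Hilbert space and `𝕋` the circle.
Every sup-norm-bounded linear functional on `C(𝕋, B(H))` that is tracial on the ideal of
functions with compact-operator values vanishes on that ideal (`𝒦 ⊗ C(𝕋)`). -/
theorem tracial_functional_vanishes_on_compact_valued_functions
    (H : Type*) [NormedAddCommGroup H] [InnerProductSpace ℂ H] [CompleteSpace H]
    [TopologicalSpace.SeparableSpace H] (hinf : ¬ FiniteDimensional ℂ H)
    (τ : C(Circle, H →L[ℂ] H) →L[ℂ] ℂ)
    (htr : ∀ f g : C(Circle, H →L[ℂ] H),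
      (∀ x, IsCompactOperator (f x)) → (∀ x, IsCompactOperator (g x)) →
        τ (f * g) = τ (g * f))
    (f : C(Circle, H →L[ℂ] H)) (hf : ∀ x, IsCompactOperator (f x)) : τ f = 0 := by
  obtain ⟨b⟩ := exists_hilbertBasis_nat H hinf
  -- Step B : τ vanishes on `const P_m * f`
  have keyB : ∀ m : ℕ, τ ((ContinuousMap.const Circle (POp b m)) * f) = 0 := by
    intro m
    set g : C(Circle, H →L[ℂ] H) := ContinuousMap.const Circle (POp b m) * f with hg
    have hgx : ∀ x, g x = POp b m * f x := fun x => rfl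
    have hgc : ∀ x, IsCompactOperator (g x) := by
      intro x
      have h := (hf x).clm_comp (POp b m)
      have hcoe : ⇑(g x) = ⇑(POp b m) ∘ ⇑(f x) := rfl
      rw [hcoe]
      exact h
    have hTj : ∀ j : ℕ, τ (ContinuousMap.const Circle (WOp b m j) * g *
        ContinuousMap.const Circle (WdOp b m j)) = τ g := by
      intro j
      have h1 : ∀ x, IsCompactOperator ((ContinuousMap.const Circle (WOp b m j) * g) x) := by
        intro x
        have h := (hgc x).clm_comp (WOp b m j)
        have hcoe : ⇑((ContinuousMap.const Circle (WOp b m j) * g) x)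
            = ⇑(WOp b m j) ∘ ⇑(g x) := rfl
        rw [hcoe]
        exact h
      have h2 : ∀ x, IsCompactOperator ((ContinuousMap.const Circle (WdOp b m j)) x) :=
        fun x => isCompactOperator_WdOp b m j
      have htrj := htr _ _ h1 h2
      rw [htrj]
      congr 1
      refine ContinuousMap.ext fun x => ?_
      show WdOp b m j * ((WOp b m j) * (POp b m * f x)) = POp b m * f x
      rw [← mul_assoc, WdOp_mul_WOp, ← mul_assoc, POp_mul_POp]
    have hsum : ∀ N : ℕ, (N : ℝ) * ‖τ g‖ ≤ ‖τ‖ * ‖g‖ := by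
      intro N
      have hτsum : τ (∑ j ∈ Finset.range N, ContinuousMap.const Circle (WOp b m j) * g *
          ContinuousMap.const Circle (WdOp b m j)) = (N : ℂ) * τ g := by
        rw [map_sum, Finset.sum_congr rfl fun j _ => hTj j, Finset.sum_const,
          Finset.card_range, nsmul_eq_mul]
      have hns : ‖∑ j ∈ Finset.range N, ContinuousMap.const Circle (WOp b m j) * g *
          ContinuousMap.const Circle (WdOp b m j)‖ ≤ ‖g‖ := by
        rw [ContinuousMap.norm_le _ (norm_nonneg g)]
        intro x
        have happ : (∑ j ∈ Finset.range N, ContinuousMap.const Circle (WOp b m j) * g *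
            ContinuousMap.const Circle (WdOp b m j)) x
            = ∑ j ∈ Finset.range N, WOp b m j * g x * WdOp b m j := by
          simp [ContinuousMap.sum_apply]
        rw [happ]
        exact le_trans (norm_block_sum_le b (g x) m N) (ContinuousMap.norm_coe_le_norm g x)
      have hb1 : ‖(N : ℂ) * τ g‖ = (N : ℝ) * ‖τ g‖ := by
        rw [norm_mul, Complex.norm_natCast]
      calc (N : ℝ) * ‖τ g‖ = ‖(N : ℂ) * τ g‖ := hb1.symm
        _ = ‖τ (∑ j ∈ Finset.range N, ContinuousMap.const Circle (WOp b m j) * g *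
              ContinuousMap.const Circle (WdOp b m j))‖ := by rw [hτsum]
        _ ≤ ‖τ‖ * ‖∑ j ∈ Finset.range N, ContinuousMap.const Circle (WOp b m j) * g *
              ContinuousMap.const Circle (WdOp b m j)‖ := τ.le_opNorm _
        _ ≤ ‖τ‖ * ‖g‖ := mul_le_mul_of_nonneg_left hns (norm_nonneg τ)
    by_contra hne
    have hpos : 0 < ‖τ g‖ := norm_pos_iff.mpr hne
    obtain ⟨N, hN⟩ := exists_nat_gt ((‖τ‖ * ‖g‖) / ‖τ g‖)
    have h1 := hsum N
    have h2 : (N : ℝ) ≤ (‖τ‖ * ‖g‖) / ‖τ g‖ := by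
      rw [le_div_iff₀ hpos]; linarith
    linarith
  -- Step A + conclusion
  have key : ∀ ε : ℝ, 0 < ε → ‖τ f‖ ≤ ‖τ‖ * ε := by
    intro ε hε
    obtain ⟨m, hm⟩ := approx_uniform b f hf hε
    have h1 : ‖f - ContinuousMap.const Circle (POp b m) * f‖ ≤ ε := by
      rw [ContinuousMap.norm_le _ hε.le]
      intro x
      have : (f - ContinuousMap.const Circle (POp b m) * f) x = f x - POp b m * f x := rfl
      rw [this]
      exact hm x
    calc ‖τ f‖ = ‖τ (f - ContinuousMap.const Circle (POp b m) * f)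
          + τ (ContinuousMap.const Circle (POp b m) * f)‖ := by
          rw [map_sub, sub_add_cancel]
      _ = ‖τ (f - ContinuousMap.const Circle (POp b m) * f)‖ := by rw [keyB m, add_zero]
      _ ≤ ‖τ‖ * ‖f - ContinuousMap.const Circle (POp b m) * f‖ := τ.le_opNorm _
      _ ≤ ‖τ‖ * ε := mul_le_mul_of_nonneg_left h1 (norm_nonneg τ)
  have hzero : ‖τ f‖ ≤ 0 := by
    refine le_of_forall_pos_le_add fun ε hε => ?_
    have hε' : 0 < ε / (‖τ‖ + 1) := by positivity
    have := key _ hε'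
    have hτ1 : ‖τ‖ * (ε / (‖τ‖ + 1)) ≤ ε := by
      rw [mul_div_assoc']
      rw [div_le_iff₀ (by positivity)]
      nlinarith [norm_nonneg τ]
    linarith
  simpa using norm_le_zero_iff.mp hzero
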